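/- Let a₁, a₂, a₃ ∈ ℝ² be the three nearest-neighbor vectors of the honeycomb lattice with a₁ + a₂ + a₃ = 0 and |aᵢ| = 1. Then the function (h₁, h₂)(k) = (Σᵢ cos(k·aᵢ), Σᵢ sin(k·aᵢ)) vanishes exactly at the two Dirac points K and K' = −K in the Brillouin zone torus, where K = (4π/(3√3), 0) in the standard coordinates with a₁ = (0,1), a₂ = (√3/2, −1/2), a₃ = (−√3/2, −1/2). -/
import Mathlib


open Real


lemma hc_eat : Real.cos (2*π/3) = -(1/2) := by
  rw [show (2*π/3 : ℝ) = π - π/3 by ring, Real.cos_pi_sub, Real.cos_pi_div_three]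

lemma hs_eat : Real.sin (2*π/3) = Real.sqrt 3 / 2 := by
  rw [show (2*π/3 : ℝ) = π - π/3 by ring, Real.sin_pi_sub, Real.sin_pi_div_three]

lemma eq_of_cos_sin (x c : ℝ) (hc : Real.cos x = Real.cos c) (hs : Real.sin x = Real.sin c) :
    ∃ n : ℤ, x = c + 2*π*n := by
  have h : Complex.exp (x * Complex.I) = Complex.exp (c * Complex.I) := by
    rw [Complex.exp_mul_I, Complex.exp_mul_I, ← Complex.ofReal_cos, ← Complex.ofReal_sin,
      ← Complex.ofReal_cos, ← Complex.ofReal_sin, hc, hs]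
  rw [Complex.exp_eq_exp_iff_exists_int] at h
  obtain ⟨n, hn⟩ := h
  have := congrArg Complex.im hn
  simp at this
  exact ⟨n, by linarith⟩

lemma rot (t A B : ℝ) :
    (Real.cos t * A - Real.sin t * B = 0 ∧ Real.sin t * A + Real.cos t * B = 0) ↔
    (A = 0 ∧ B = 0) := by
  constructor
  · rintro ⟨h1, h2⟩
    have hp := Real.sin_sq_add_cos_sq t
    constructor
    · linear_combination Real.cos t * h1 + Real.sin t * h2 - A * hp
    · linear_combination (-Real.sin t) * h1 + Real.cos t * h2 - B * hp
  · rintro ⟨hA, hB⟩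
    simp [hA, hB]

lemma key (x y : ℝ) :
    (1 + Real.cos x + Real.cos y = 0 ∧ Real.sin x + Real.sin y = 0) ↔
    ((∃ n : ℤ, x = 2*π/3 + 2*π*n) ∧ (∃ m : ℤ, y = -(2*π/3) + 2*π*m)) ∨
    ((∃ n : ℤ, x = -(2*π/3) + 2*π*n) ∧ (∃ m : ℤ, y = 2*π/3 + 2*π*m)) := by
  have h34 : (Real.sqrt 3 / 2)^2 = 3/4 := by
    rw [div_pow, Real.sq_sqrt (by norm_num : (3:ℝ) ≥ 0)]; norm_num
  constructor
  · rintro ⟨h1, h2⟩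
    have px := Real.sin_sq_add_cos_sq x
    have py := Real.sin_sq_add_cos_sq y
    have hcx : Real.cos x = -(1/2) := by
      linear_combination (1 + Real.cos x - Real.cos y)/2 * h1 +
        (Real.sin x - Real.sin y)/2 * h2 + (1/2)*py - (1/2)*px
    have hcy : Real.cos y = -(1/2) := by linarith
    have hsx : Real.sin x ^ 2 = 3/4 := by linear_combination px - (Real.cos x - 1/2)*hcx
    have hfac : (Real.sin x - Real.sqrt 3/2) * (Real.sin x + Real.sqrt 3/2) = 0 := by
      linear_combination hsx - h34
    rcases mul_eq_zero.mp hfac with h | h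
    · left
      have hsx' : Real.sin x = Real.sqrt 3 / 2 := by linarith
      have hsy' : Real.sin y = -(Real.sqrt 3 / 2) := by linarith
      constructor
      · exact eq_of_cos_sin x (2*π/3) (by rw [hc_eat]; exact hcx) (by rw [hs_eat]; exact hsx')
      · exact eq_of_cos_sin y (-(2*π/3)) (by rw [Real.cos_neg, hc_eat]; exact hcy)
          (by rw [Real.sin_neg, hs_eat]; exact hsy')
    · right
      have hsx' : Real.sin x = -(Real.sqrt 3 / 2) := by linarith
      have hsy' : Real.sin y = Real.sqrt 3 / 2 := by linarith
      constructor
      · exact eq_of_cos_sin x (-(2*π/3)) (by rw [Real.cos_neg, hc_eat]; exact hcx)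
          (by rw [Real.sin_neg, hs_eat]; exact hsx')
      · exact eq_of_cos_sin y (2*π/3) (by rw [hc_eat]; exact hcy) (by rw [hs_eat]; exact hsy')
  · rintro (⟨⟨n, hn⟩, ⟨m, hm⟩⟩ | ⟨⟨n, hn⟩, ⟨m, hm⟩⟩)
    · subst hn hm
      rw [show (2*π/3 : ℝ) + 2*π*n = 2*π/3 + n*(2*π) by push_cast; ring,
        show (-(2*π/3) : ℝ) + 2*π*m = -(2*π/3) + m*(2*π) by push_cast; ring,
        Real.cos_add_int_mul_two_pi, Real.sin_add_int_mul_two_pi,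
        Real.cos_add_int_mul_two_pi, Real.sin_add_int_mul_two_pi,
        Real.cos_neg, Real.sin_neg, hc_eat, hs_eat]
      constructor <;> ring
    · subst hn hm
      rw [show (-(2*π/3) : ℝ) + 2*π*n = -(2*π/3) + n*(2*π) by push_cast; ring,
        show (2*π/3 : ℝ) + 2*π*m = 2*π/3 + m*(2*π) by push_cast; ring,
        Real.cos_add_int_mul_two_pi, Real.sin_add_int_mul_two_pi,
        Real.cos_add_int_mul_two_pi, Real.sin_add_int_mul_two_pi,
        Real.cos_neg, Real.sin_neg, hc_eat, hs_eat]
      constructor <;> ring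


/-- For the honeycomb lattice with nearest-neighbor vectors `a₁ = (0,1)`,
`a₂ = (√3/2, -1/2)`, `a₃ = (-√3/2, -1/2)` (so `a₁ + a₂ + a₃ = 0`, `|aᵢ| = 1`), the function
`(h₁,h₂)(k) = (Σᵢ cos(k·aᵢ), Σᵢ sin(k·aᵢ))` vanishes exactly at the two Dirac points
`K = (4π/(3√3), 0)` and `K' = -K`, modulo the reciprocal lattice `Λ*` of the triangular
Bravais lattice spanned by `a₂ - a₁` and `a₃ - a₁`; moreover `K` and `K'` are distinct
points of the Brillouin-zone torus, i.e. `K - K' = 2K ∉ Λ*`. -/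
theorem honeycomb_dirac_points
    (a₁ a₂ a₃ : ℝ × ℝ)
    (ha₁ : a₁ = (0, 1)) (ha₂ : a₂ = (Real.sqrt 3 / 2, -(1 / 2)))
    (ha₃ : a₃ = (-(Real.sqrt 3) / 2, -(1 / 2)))
    (K : ℝ × ℝ) (hK : K = (4 * π / (3 * Real.sqrt 3), 0))
    (dot : ℝ × ℝ → ℝ × ℝ → ℝ) (hdot : ∀ u v, dot u v = u.1 * v.1 + u.2 * v.2)
    (Λstar : Set (ℝ × ℝ))
    (hΛ : Λstar = {g | (∃ m : ℤ, dot g (a₂ - a₁) = 2 * π * m) ∧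
                       (∃ m : ℤ, dot g (a₃ - a₁) = 2 * π * m)}) :
    (∀ k : ℝ × ℝ,
      (Real.cos (dot k a₁) + Real.cos (dot k a₂) + Real.cos (dot k a₃) = 0 ∧
       Real.sin (dot k a₁) + Real.sin (dot k a₂) + Real.sin (dot k a₃) = 0) ↔
      (∃ g ∈ Λstar, k = K + g ∨ k = -K + g)) ∧
    K + K ∉ Λstar := by
  subst ha₁ ha₂ ha₃ hK hΛ
  have h3 : Real.sqrt 3 * Real.sqrt 3 = 3 := Real.mul_self_sqrt (by norm_num)
  have hs3 : (0:ℝ) < Real.sqrt 3 := Real.sqrt_pos.mpr (by norm_num)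
  have hπ : (0:ℝ) < π := Real.pi_pos
  set c : ℝ := 4 * π / (3 * Real.sqrt 3) with hcdef
  have hc : Real.sqrt 3 / 2 * c = 2 * π / 3 := by
    rw [hcdef]; field_simp; ring
  constructor
  · intro k
    set X : ℝ := Real.sqrt 3 / 2 * k.1 - 3/2 * k.2 with hX
    set Y : ℝ := -(Real.sqrt 3) / 2 * k.1 - 3/2 * k.2 with hY
    have step1 : (Real.cos (dot k (0,1)) + Real.cos (dot k (Real.sqrt 3/2, -(1/2)))
          + Real.cos (dot k (-(Real.sqrt 3)/2, -(1/2))) = 0 ∧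
        Real.sin (dot k (0,1)) + Real.sin (dot k (Real.sqrt 3/2, -(1/2)))
          + Real.sin (dot k (-(Real.sqrt 3)/2, -(1/2))) = 0) ↔
        (1 + Real.cos X + Real.cos Y = 0 ∧ Real.sin X + Real.sin Y = 0) := by
      rw [hdot, hdot, hdot]
      simp only []
      rw [show k.1 * 0 + k.2 * 1 = k.2 by ring,
        show k.1 * (Real.sqrt 3/2) + k.2 * (-(1/2)) = k.2 + X by rw [hX]; ring,
        show k.1 * (-(Real.sqrt 3)/2) + k.2 * (-(1/2)) = k.2 + Y by rw [hY]; ring,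
        Real.cos_add, Real.cos_add, Real.sin_add, Real.sin_add]
      rw [show Real.cos k.2 + (Real.cos k.2 * Real.cos X - Real.sin k.2 * Real.sin X)
            + (Real.cos k.2 * Real.cos Y - Real.sin k.2 * Real.sin Y)
          = Real.cos k.2 * (1 + Real.cos X + Real.cos Y)
            - Real.sin k.2 * (Real.sin X + Real.sin Y) by ring,
        show Real.sin k.2 + (Real.sin k.2 * Real.cos X + Real.cos k.2 * Real.sin X)
            + (Real.sin k.2 * Real.cos Y + Real.cos k.2 * Real.sin Y)
          = Real.sin k.2 * (1 + Real.cos X + Real.cos Y)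
            + Real.cos k.2 * (Real.sin X + Real.sin Y) by ring]
      exact rot k.2 _ _
    rw [step1, key X Y]
    constructor
    · rintro (⟨⟨n, hn⟩, ⟨m, hm⟩⟩ | ⟨⟨n, hn⟩, ⟨m, hm⟩⟩)
      · refine ⟨(k.1 - c, k.2), ⟨⟨n, ?_⟩, ⟨m, ?_⟩⟩, Or.inl ?_⟩
        · rw [hdot]; simp only [Prod.fst_sub, Prod.snd_sub]
          push_cast
          norm_num
          linear_combination hn - hc
        · rw [hdot]; simp only [Prod.fst_sub, Prod.snd_sub]
          push_cast
          norm_num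
          linear_combination hm + hc
        · ext <;> simp <;> ring
      · refine ⟨(k.1 + c, k.2), ⟨⟨n, ?_⟩, ⟨m, ?_⟩⟩, Or.inr ?_⟩
        · rw [hdot]; simp only [Prod.fst_sub, Prod.snd_sub]
          push_cast
          norm_num
          linear_combination hn + hc
        · rw [hdot]; simp only [Prod.fst_sub, Prod.snd_sub]
          push_cast
          norm_num
          linear_combination hm - hc
        · ext <;> simp <;> ring
    · rintro ⟨g, ⟨⟨n, hn⟩, ⟨m, hm⟩⟩, hk | hk⟩
      · rw [hdot] at hn hm
        simp only [Prod.fst_sub, Prod.snd_sub] at hn hm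
        norm_num at hn hm
        have hk1 : k.1 = c + g.1 := by rw [hk]; simp
        have hk2 : k.2 = g.2 := by rw [hk]; simp
        left
        exact ⟨⟨n, by rw [hX]; rw [hk1, hk2]; linear_combination hn + hc⟩,
               ⟨m, by rw [hY]; rw [hk1, hk2]; linear_combination hm - hc⟩⟩
      · rw [hdot] at hn hm
        simp only [Prod.fst_sub, Prod.snd_sub] at hn hm
        norm_num at hn hm
        have hk1 : k.1 = -c + g.1 := by rw [hk]; simp
        have hk2 : k.2 = g.2 := by rw [hk]; simp
        right
        exact ⟨⟨n, by rw [hX]; rw [hk1, hk2]; linear_combination hn - hc⟩,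
               ⟨m, by rw [hY]; rw [hk1, hk2]; linear_combination hm + hc⟩⟩
  · rintro ⟨⟨m, hm⟩, -⟩
    rw [hdot] at hm
    simp only [Prod.fst_sub, Prod.snd_sub, Prod.fst_add, Prod.snd_add] at hm
    norm_num at hm
    have hm' : (m : ℝ) = 2/3 := by
      have h2π : (2:ℝ) * π ≠ 0 := by positivity
      have : 2 * π * (m:ℝ) = 2 * π * (2/3) := by linear_combination 2*hc - hm
      exact mul_left_cancel₀ h2π this
    have h3m : ((3 * m : ℤ) : ℝ) = 2 := by push_cast; linarith
    have : (3 * m : ℤ) = 2 := by exact_mod_cast h3m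
    omega
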